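/- Let E be a directed graph with vertex sequence v_1, v_2, … where each v_{n+1} emits exactly two edges e_n, f_n to v_n (the Bratteli diagram of the CAR algebra). Then E fails to have finite ancestry: for each k ≥ 1, the pair (f_1 e_2 f_3 ⋯ e_{2k}, e_1 f_2 e_3 ⋯ f_{2k}) is a cycle-free minimal ancestry pair for (v_1, v_1), and these pairs are pairwise distinct. -/

import Mathlib

/-- A directed graph: edges `E`, vertices `V`, range and source maps. -/
structure DirGraph where
  V : Type
  E : Type
  r : E → V
  s : E → V

/-- Shift an infinite path (sequence of edges) by `p`. -/
def shift (p : ℕ) {α : Type} (x : ℕ → α) : ℕ → α := fun i => x (i + p)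

namespace DirGraph

variable (G : DirGraph)

/-- `IsPath G v l u` : the list of edges `l` is a finite path with range `v` and
source `u` (edges are composed so that `s eᵢ = r eᵢ₊₁`). -/
inductive IsPath : G.V → List G.E → G.V → Prop
  | nil (v : G.V) : IsPath v [] v
  | cons (e : G.E) {l : List G.E} {u : G.V} :
      IsPath (G.s e) l u → IsPath (G.r e) (e :: l) u

/-- An infinite path: a sequence of edges with `s(xᵢ) = r(xᵢ₊₁)`. -/
def InfPath (x : ℕ → G.E) : Prop := ∀ i, G.s (x i) = G.r (x (i + 1))

/-- Prepend a finite path (list of edges) to an infinite path. -/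
def prepend (l : List G.E) (x : ℕ → G.E) : ℕ → G.E :=
  fun i => if h : i < l.length then l.get ⟨i, h⟩ else x (i - l.length)

/-- A cycle: a nonempty finite path with equal range and source. -/
def IsCycle (c : List G.E) : Prop := c ≠ [] ∧ ∃ u, G.IsPath u c u

/-- A finite path contains a cycle if some (contiguous) subpath is a cycle. -/
def ContainsCycle (l : List G.E) : Prop :=
  ∃ p c q, l = p ++ c ++ q ∧ G.IsCycle c

/-- A simple cycle: a cycle containing no other cycle as a proper subpath. -/
def IsSimpleCycle (c : List G.E) : Prop :=
  G.IsCycle c ∧ ∀ p c' q, c = p ++ c' ++ q → G.IsCycle c' → c' = c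

/-- A pair of finite paths is minimal if no nontrivial common final segment
can be factored out. -/
def Minimal (a b : List G.E) : Prop :=
  ∀ a' b' n, a = a' ++ n → b = b' ++ n → n = []

/-- No cycle of `G` has an entrance: for every edge `f` on a cycle, `f` is the
only edge with range `r f`. -/
def NoCycleHasEntrance : Prop :=
  ∀ u c, G.IsCycle c → G.IsPath u c u → ∀ f ∈ c, ∀ e, G.r e = G.r f → e = f

/-- Row-finite: every vertex receives only finitely many edges. -/
def RowFinite : Prop := ∀ v, {e : G.E | G.r e = v}.Finite

/-- No sources: every vertex receives an edge. -/
def NoSources : Prop := ∀ v : G.V, ∃ e, G.r e = v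

/-- Minimal cycle-free ancestry pair for the vertices `v, w`. -/
def MCFPair (v w : G.V) (a b : List G.E) : Prop :=
  (∃ u, G.IsPath v a u ∧ G.IsPath w b u) ∧ G.Minimal a b ∧
    ¬G.ContainsCycle a ∧ ¬G.ContainsCycle b

end DirGraph


namespace DirGraph

theorem IsPath.append_path {G : DirGraph} {v u w : G.V} {l l' : List G.E}
    (h1 : G.IsPath v l u) (h2 : G.IsPath u l' w) : G.IsPath v (l ++ l') w := by
  induction h1 with
  | nil => exact h2
  | cons x _ ih => exact .cons x (ih h2)

theorem IsPath.range_eq {G : DirGraph} {w u : G.V} {x : G.E} {tl : List G.E}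
    (hp : G.IsPath w (x :: tl) u) : w = G.r x := by
  cases hp; rfl

end DirGraph

theorem lastmap {α β : Type} (h : α → β) (t : ℕ) (r : ℕ → α) :
    ((List.range (t + 1)).map (fun i => h (r i))).getLast? = some (h (r t)) := by
  rw [List.range_succ, List.map_append]
  simp

/-- The Bratteli diagram of the CAR algebra (vertices `v n`, with
exactly two edges `e n, f n` from `v (n+1)` to `v n`) fails to have finite
ancestry: for each `k ≥ 1`, the pair `(f₁e₂f₃⋯e₂ₖ, e₁f₂e₃⋯f₂ₖ)` is a cycle-free
minimal ancestry pair for `(v₁, v₁)`, these pairs are pairwise distinct, and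
`(v₁, v₁)` has infinitely many cycle-free minimal ancestry pairs. -/
theorem CAR_diagram_fails_finite_ancestry (G : DirGraph)
    (v : ℕ → G.V) (e f : ℕ → G.E)
    (hv : Function.Injective v)
    (hre : ∀ n, G.r (e n) = v n) (hrf : ∀ n, G.r (f n) = v n)
    (hse : ∀ n, G.s (e n) = v (n + 1)) (hsf : ∀ n, G.s (f n) = v (n + 1))
    (hef : ∀ n, e n ≠ f n)
    (hall : ∀ x : G.E, ∃ n, x = e n ∨ x = f n) :
    (∀ k : ℕ, 1 ≤ k →
      G.MCFPair (v 0) (v 0)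
        ((List.range (2 * k)).map (fun i => if i % 2 = 0 then f i else e i))
        ((List.range (2 * k)).map (fun i => if i % 2 = 0 then e i else f i))) ∧
    (∀ k k' : ℕ, 1 ≤ k → 1 ≤ k' → k ≠ k' →
      ((List.range (2 * k)).map (fun i => if i % 2 = 0 then f i else e i),
        (List.range (2 * k)).map (fun i => if i % 2 = 0 then e i else f i)) ≠
      ((List.range (2 * k')).map (fun i => if i % 2 = 0 then f i else e i),
        (List.range (2 * k')).map (fun i => if i % 2 = 0 then e i else f i))) ∧
    ¬{p : List G.E × List G.E | G.MCFPair (v 0) (v 0) p.1 p.2}.Finite := by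
  classical
  -- edge data
  have hrx : ∀ x : G.E, ∃ n, G.r x = v n ∧ G.s x = v (n + 1) := by
    intro x
    obtain ⟨n, hx⟩ := hall x
    rcases hx with h | h <;> subst h
    · exact ⟨n, hre n, hse n⟩
    · exact ⟨n, hrf n, hsf n⟩
  -- length lemma
  have hlen : ∀ {w u : G.V} {l : List G.E}, G.IsPath w l u → ∀ m, w = v m →
      u = v (m + l.length) := by
    intro w u l hp
    induction hp with
    | nil w => intro m hm; simpa using hm
    | cons x hp ih =>
      intro m hm
      obtain ⟨n, hrn, hsn⟩ := hrx x
      have hnm : n = m := hv (hrn.symm.trans hm)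
      subst hnm
      have h2 := ih (n + 1) hsn
      rw [h2, List.length_cons]
      congr 1
      omega
  -- no cycles
  have nocyc : ∀ c : List G.E, ¬ G.IsCycle c := by
    rintro c ⟨hne, u, hp⟩
    obtain ⟨x, tl, rfl⟩ : ∃ x tl, c = x :: tl := by
      cases c with
      | nil => exact absurd rfl hne
      | cons x tl => exact ⟨x, tl, rfl⟩
    obtain ⟨n, hrn, _⟩ := hrx x
    have hu : u = v n := hp.range_eq.trans hrn
    have h2 := hlen hp n hu
    have := hv (hu.symm.trans h2)
    simp at this
  have ncc : ∀ l : List G.E, ¬ G.ContainsCycle l := by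
    rintro l ⟨p, c, q, _, hc⟩
    exact nocyc c hc
  -- paths from range lists
  have path_of : ∀ (h : ℕ → G.E), (∀ i, G.r (h i) = v i) → (∀ i, G.s (h i) = v (i + 1)) →
      ∀ m, G.IsPath (v 0) ((List.range m).map h) (v m) := by
    intro h hr hs m
    induction m with
    | zero => simpa using DirGraph.IsPath.nil (G := G) (v 0)
    | succ t ih =>
      rw [List.range_succ, List.map_append]
      refine ih.append_path ?_
      have h1 : G.IsPath (G.r (h t)) [h t] (v (t + 1)) :=
        .cons (h t) (hs t ▸ DirGraph.IsPath.nil (G := G) (v (t + 1)))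
      rwa [hr t] at h1
  set A : ℕ → List G.E := fun k => (List.range (2 * k)).map (fun i => if i % 2 = 0 then f i else e i) with hA
  set B : ℕ → List G.E := fun k => (List.range (2 * k)).map (fun i => if i % 2 = 0 then e i else f i) with hB
  have hgr1 : ∀ i, G.r ((fun i => if i % 2 = 0 then f i else e i) i) = v i := by
    intro i; by_cases h : i % 2 = 0 <;> simp [h, hre, hrf]
  have hgs1 : ∀ i, G.s ((fun i => if i % 2 = 0 then f i else e i) i) = v (i + 1) := by
    intro i; by_cases h : i % 2 = 0 <;> simp [h, hse, hsf]
  have hgr2 : ∀ i, G.r ((fun i => if i % 2 = 0 then e i else f i) i) = v i := by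
    intro i; by_cases h : i % 2 = 0 <;> simp [h, hre, hrf]
  have hgs2 : ∀ i, G.s ((fun i => if i % 2 = 0 then e i else f i) i) = v (i + 1) := by
    intro i; by_cases h : i % 2 = 0 <;> simp [h, hse, hsf]
  have hMCF : ∀ k : ℕ, 1 ≤ k → G.MCFPair (v 0) (v 0) (A k) (B k) := by
    intro k hk
    refine ⟨⟨v (2 * k), path_of _ hgr1 hgs1 (2 * k), path_of _ hgr2 hgs2 (2 * k)⟩, ?_, ncc _, ncc _⟩
    intro a' b' n ha hb
    by_contra hne
    obtain ⟨t, ht⟩ : ∃ t, 2 * k = t + 1 := ⟨2 * k - 1, by omega⟩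
    have hodd : t % 2 ≠ 0 := by omega
    have hla : (A k).getLast? = some (e t) := by
      rw [hA]
      simp only [ht, List.range_succ, List.map_append, List.map_cons, List.map_nil]
      rw [List.getLast?_append_of_ne_nil _ (by simp)]
      simp [hodd]
    have hlb : (B k).getLast? = some (f t) := by
      rw [hB]
      simp only [ht, List.range_succ, List.map_append, List.map_cons, List.map_nil]
      rw [List.getLast?_append_of_ne_nil _ (by simp)]
      simp [hodd]
    have heq : (A k).getLast? = (B k).getLast? := by
      rw [ha, hb, List.getLast?_append_of_ne_nil _ hne, List.getLast?_append_of_ne_nil _ hne]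
    rw [hla, hlb] at heq
    exact hef t (Option.some.inj heq)
  have hAlen : ∀ k, (A k).length = 2 * k := by intro k; simp [hA]
  refine ⟨hMCF, ?_, ?_⟩
  · intro k k' hk hk' hkk' h
    have := congrArg (fun p => p.1.length) h
    simp only [hAlen, List.length_map, List.length_range] at this
    exact hkk' (by omega)
  · intro hfin
    have := Set.infinite_of_injective_forall_mem
      (f := fun k : ℕ => (A (k + 1), B (k + 1)))
      (s := {p : List G.E × List G.E | G.MCFPair (v 0) (v 0) p.1 p.2})
      (fun k k' h => by
        have := congrArg (fun p => p.1.length) h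
        simp only [hAlen] at this
        omega)
      (fun k => hMCF (k + 1) (by omega))
    exact this hfin
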